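/- Let M : H → H be a bounded self-adjoint positive semidefinite linear operator on a real Hilbert space H, and let A : H → 2^H be maximal monotone. Then the resolvent J := (M+A)^{-1}M is M-cocoercive: for all (u,v), (u',v') in the graph of J, ⟨v − v', u − u'⟩_M ≥ ‖v − v'‖²_M, where ⟨a,b⟩_M := ⟨a, Mb⟩ and ‖a‖²_M := ⟨a, Ma⟩. -/

import Mathlib

/-- The preconditioned resolvent `J = (M+A)⁻¹M` of a maximal monotone operator `A`
with a self-adjoint positive semidefinite preconditioner `M` is `M`-cocoercive:
for `(u,v), (u',v')` in the graph of `J` (i.e. `Mu − Mv ∈ A v`),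
`⟨v − v', u − u'⟩_M ≥ ‖v − v'‖²_M`. -/
theorem stmt3 {H : Type*} [NormedAddCommGroup H] [InnerProductSpace ℝ H] [CompleteSpace H]
    (M : H →L[ℝ] H)
    (hsa : ∀ x y : H, (inner ℝ (M x) y : ℝ) = inner ℝ x (M y))
    (hpsd : ∀ x : H, 0 ≤ (inner ℝ x (M x) : ℝ))
    (A : H → Set H)
    (hmono : ∀ u u' a a' : H, a ∈ A u → a' ∈ A u' → 0 ≤ (inner ℝ (a - a') (u - u') : ℝ))
    (hmax : ∀ u a : H,
      (∀ u' a' : H, a' ∈ A u' → 0 ≤ (inner ℝ (a - a') (u - u') : ℝ)) → a ∈ A u)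
    (u v u' v' : H)
    (huv : M u - M v ∈ A v) (huv' : M u' - M v' ∈ A v') :
    (inner ℝ (v - v') (M (u - u')) : ℝ) ≥ (inner ℝ (v - v') (M (v - v')) : ℝ) := by
  have h := hmono v v' _ _ huv huv'
  have key : (M u - M v) - (M u' - M v') = M (u - u') - M (v - v') := by
    simp [map_sub]; abel
  rw [key, inner_sub_left] at h
  have h1 : (inner ℝ (M (u - u')) (v - v') : ℝ) = inner ℝ (v - v') (M (u - u')) := by
    rw [hsa, real_inner_comm, hsa]
  have h2 : (inner ℝ (M (v - v')) (v - v') : ℝ) = inner ℝ (v - v') (M (v - v')) := by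
    rw [hsa, real_inner_comm, hsa]
  rw [h1, h2] at h
  linarith
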